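/- For T ≥ 2 and p ∈ (0, 1/2), the total variation distance between Bin(T,p) and Bin(T-1,p) + Bern(1-p) is at most (1-2p)/√(4p(1-p)T). -/

import Mathlib

/-- Probability mass function of the binomial distribution `Bin(T, p)` at `k`. -/
noncomputable def binomPMF (T : ℕ) (p : ℝ) (k : ℕ) : ℝ :=
  (T.choose k : ℝ) * p ^ k * (1 - p) ^ (T - k)

/-- PMF of the independent sum `Bin(T-1, p) + Bern(q)` at `k`. -/
noncomputable def binBernConvPMF (T : ℕ) (p q : ℝ) (k : ℕ) : ℝ :=
  (1 - q) * binomPMF (T - 1) p k +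
    q * (if k = 0 then 0 else binomPMF (T - 1) p (k - 1))

/-- Total variation distance between two probability distributions on ℕ. -/
noncomputable def tvDist (f g : ℕ → ℝ) : ℝ := (1 / 2) * ∑' k, |f k - g k|


open Real Filter

noncomputable def aSeq (k : ℕ) : ℝ := (Nat.centralBinom k : ℝ) / 4 ^ k

lemma aSeq_pos (k : ℕ) : 0 < aSeq k := by
  unfold aSeq
  have := Nat.centralBinom_pos k
  positivity

lemma aSeq_sq (k : ℕ) : aSeq k ^ 2 = 1 / (Real.Wallis.W k * (2 * k + 1)) := by
  have hW := Real.Wallis.W_eq_factorial_ratio k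
  have hfac : (0:ℝ) < (Nat.factorial k : ℝ) := by positivity
  have hfac2 : (0:ℝ) < (Nat.factorial (2*k) : ℝ) := by positivity
  have hcb : (Nat.centralBinom k : ℝ) =
      (Nat.factorial (2*k) : ℝ) / ((Nat.factorial k : ℝ) * (Nat.factorial k : ℝ)) := by
    unfold Nat.centralBinom
    rw [Nat.cast_choose ℝ (by omega : k ≤ 2*k), show 2*k - k = k from by omega]
  unfold aSeq
  rw [hcb, hW]
  have h2 : ((2:ℝ))^(4*k) = (4:ℝ)^k * 4^k := by
    have : (4:ℝ) = 2^2 := by norm_num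
    rw [this, ← pow_mul, ← pow_add]
    congr 1
    omega
  field_simp
  rw [h2]
  ring

lemma aSeq_sq_lower (k : ℕ) : 2 / π ≤ aSeq k ^ 2 * (2 * k + 1) := by
  have h := Real.Wallis.W_le k
  have hWpos := Real.Wallis.W_pos k
  have hk : (0:ℝ) < 2 * (k:ℝ) + 1 := by positivity
  rw [aSeq_sq]
  have he : 1/(Real.Wallis.W k * (2 * (k:ℝ) + 1)) * (2*(k:ℝ)+1) = 1 / Real.Wallis.W k := by
    field_simp
  rw [he]
  calc 2/π = 1/(π/2) := by
        rw [div_div_eq_mul_div, one_mul]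
    _ ≤ 1 / Real.Wallis.W k := one_div_le_one_div_of_le hWpos h

lemma aSeq_sq_upper (k : ℕ) : aSeq k ^ 2 ≤ 4 * ((k:ℝ) + 1) / (π * (2 * k + 1) ^ 2) := by
  have h := Real.Wallis.le_W k
  have hWpos := Real.Wallis.W_pos k
  have hk : (0:ℝ) < 2 * (k:ℝ) + 1 := by positivity
  have hk2 : (0:ℝ) < 2 * (k:ℝ) + 2 := by positivity
  have hlow : (0:ℝ) < (2 * (k:ℝ) + 1) / (2 * (k:ℝ) + 2) * (π/2) * (2*(k:ℝ)+1) := by positivity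
  rw [aSeq_sq]
  calc 1/(Real.Wallis.W k * (2 * (k:ℝ) + 1))
      ≤ 1/((2 * (k:ℝ) + 1) / (2 * (k:ℝ) + 2) * (π/2) * (2*(k:ℝ)+1)) := by
        apply one_div_le_one_div_of_le hlow
        exact mul_le_mul_of_nonneg_right h hk.le
    _ = 4 * ((k:ℝ) + 1) / (π * (2 * k + 1) ^ 2) := by
        rw [eq_div_iff (by positivity), one_div, inv_mul_eq_div, div_eq_iff (by positivity)]
        field_simp
        ring


open Real

noncomputable def bFun (m r : ℕ) : ℝ :=
  (((m+r).choose m : ℝ) * m^m * r^r) / (m+r)^(m+r)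

noncomputable def Bsq (m r : ℕ) : ℝ := (2*((m:ℝ)+r)+1)/(4*π*m*r)

lemma bFun_nonneg (m r : ℕ) : 0 ≤ bFun m r := by unfold bFun; positivity

lemma bFun_le_one (m r : ℕ) (h : 1 ≤ m + r) : bFun m r ≤ 1 := by
  unfold bFun
  have hpos : (0:ℝ) < (m:ℝ)+(r:ℝ) := by
    have : (0:ℝ) < (((m+r):ℕ):ℝ) := by exact_mod_cast h
    push_cast at this; linarith
  rw [div_le_one (pow_pos hpos _)]
  have hx := add_pow (m:ℝ) (r:ℝ) (m+r)
  have hmem : m ∈ Finset.range (m+r+1) := by simp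
  have hterm := Finset.single_le_sum (f := fun k =>
      (m:ℝ)^k * (r:ℝ)^(m+r-k) * ((m+r).choose k : ℝ))
    (fun i _ => by positivity) hmem
  rw [← hx] at hterm
  simp only [show m + r - m = r from by omega] at hterm
  calc ((m+r).choose m : ℝ) * m^m * r^r = (m:ℝ)^m * (r:ℝ)^r * ((m+r).choose m : ℝ) := by ring
    _ ≤ ((m:ℝ) + r)^(m+r) := hterm

lemma choose_id (m r : ℕ) :
    (((m+r).choose m : ℝ))^2 * (((2*(m+r)).choose (m+r)) : ℝ) =
    (((2*(m+r)).choose (2*m)) : ℝ) * (((2*m).choose m) : ℝ) * (((2*r).choose r) : ℝ) := by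
  rw [Nat.cast_choose ℝ (by omega : m ≤ m + r),
      Nat.cast_choose ℝ (by omega : m + r ≤ 2*(m+r)),
      Nat.cast_choose ℝ (by omega : 2*m ≤ 2*(m+r)),
      Nat.cast_choose ℝ (by omega : m ≤ 2*m),
      Nat.cast_choose ℝ (by omega : r ≤ 2*r),
      show m + r - m = r from by omega,
      show 2*(m+r) - (m+r) = m + r from by omega,
      show 2*(m+r) - 2*m = 2*r from by omega,
      show 2*m - m = m from by omega,
      show 2*r - r = r from by omega]
  have h1 : (0:ℝ) < (Nat.factorial m : ℝ) := by positivity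
  have h2 : (0:ℝ) < (Nat.factorial r : ℝ) := by positivity
  have h3 : (0:ℝ) < (Nat.factorial (m+r) : ℝ) := by positivity
  have h4 : (0:ℝ) < (Nat.factorial (2*m) : ℝ) := by positivity
  have h5 : (0:ℝ) < (Nat.factorial (2*r) : ℝ) := by positivity
  have h6 : (0:ℝ) < (Nat.factorial (2*(m+r)) : ℝ) := by positivity
  field_simp

lemma bFun_sq_eq (m r : ℕ) (hm : 1 ≤ m) (hr : 1 ≤ r) :
    bFun m r ^ 2 = bFun (2*m) (2*r) * (aSeq m * aSeq r / aSeq (m+r)) := by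
  have hcb : ∀ k : ℕ, (Nat.centralBinom k : ℝ) = ((2*k).choose k : ℝ) := by
    intro k; rfl
  have hMR : 2*m + 2*r = 2*(m+r) := by omega
  unfold bFun aSeq
  rw [hMR, hcb, hcb, hcb]
  have hnm : (0:ℝ) < ((m:ℝ)+r)^(m+r) := by positivity
  have hc1 : (0:ℝ) < (((2*m).choose m) : ℝ) := by
    exact_mod_cast Nat.choose_pos (by omega)
  have hc2 : (0:ℝ) < (((2*r).choose r) : ℝ) := by
    exact_mod_cast Nat.choose_pos (by omega)
  have hc3 : (0:ℝ) < (((2*(m+r)).choose (m+r)) : ℝ) := by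
    exact_mod_cast Nat.choose_pos (by omega)
  have hid := choose_id m r
  have hkey : (((2*(m+r)).choose (2*m)) : ℝ) =
      (((m+r).choose m : ℝ))^2 * (((2*(m+r)).choose (m+r)) : ℝ) /
        ((((2*m).choose m) : ℝ) * (((2*r).choose r) : ℝ)) := by
    rw [eq_div_iff (by positivity)]
    linarith [hid]
  rw [hkey]
  push_cast
  have p1 : (2*(m:ℝ))^(2*m) = 4^m * (m:ℝ)^(2*m) := by
    rw [mul_pow, show (4:ℝ) = 2^2 from by norm_num, ← pow_mul]
  have p2 : (2*(r:ℝ))^(2*r) = 4^r * (r:ℝ)^(2*r) := by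
    rw [mul_pow, show (4:ℝ) = 2^2 from by norm_num, ← pow_mul]
  have p3 : (2*(m:ℝ)+2*(r:ℝ))^(2*(m+r)) = 4^(m+r) * ((m:ℝ)+r)^(2*(m+r)) := by
    rw [show (2*(m:ℝ)+2*(r:ℝ)) = 2*((m:ℝ)+r) from by ring,
      mul_pow, show (4:ℝ) = 2^2 from by norm_num, ← pow_mul]
  have p4 : ((m:ℝ)+r)^(2*(m+r)) = (((m:ℝ)+r)^(m+r))^2 := by
    rw [← pow_mul, mul_comm]
  have p5 : (m:ℝ)^(2*m) = ((m:ℝ)^m)^2 := by rw [← pow_mul, mul_comm]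
  have p6 : (r:ℝ)^(2*r) = ((r:ℝ)^r)^2 := by rw [← pow_mul, mul_comm]
  have p7 : (4:ℝ)^(m+r) = 4^m * 4^r := by rw [pow_add]
  rw [p1, p2, p3, p4, p5, p6, p7]
  have h4m : (0:ℝ) < (4:ℝ)^m := by positivity
  have h4r : (0:ℝ) < (4:ℝ)^r := by positivity
  field_simp
open Real

lemma rho_sq_le (m r : ℕ) (hm : 1 ≤ m) (hr : 1 ≤ r) :
    (aSeq m * aSeq r / aSeq (m+r))^2 ≤
      8*((m:ℝ)+1)*((r:ℝ)+1)*(2*((m:ℝ)+(r:ℝ))+1) / (π*(2*m+1)^2*(2*r+1)^2) := by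
  have ham := aSeq_sq_upper m
  have har := aSeq_sq_upper r
  have han := aSeq_sq_lower (m+r)
  push_cast at han
  have hanpos := aSeq_pos (m+r)
  have hnlow : 2/(π*(2*((m:ℝ)+r)+1)) ≤ aSeq (m+r)^2 := by
    have h1 : (0:ℝ) < 2*((m:ℝ)+r)+1 := by positivity
    rw [div_le_iff₀ (by positivity)]
    have h2 : (2:ℝ) ≤ aSeq (m+r)^2 * (2*((m:ℝ)+r)+1) * π := by
      have := (div_le_iff₀ pi_pos).mp han
      nlinarith [pi_pos]
    nlinarith
  have e1 : (aSeq m * aSeq r / aSeq (m+r))^2 = aSeq m ^2 * aSeq r^2 / aSeq (m+r)^2 := by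
    rw [div_pow, mul_pow]
  rw [e1]
  have hnum : aSeq m ^2 * aSeq r ^2 ≤
      (4*((m:ℝ)+1)/(π*(2*m+1)^2)) * (4*((r:ℝ)+1)/(π*(2*r+1)^2)) :=
    mul_le_mul ham har (sq_nonneg _) (by positivity)
  calc aSeq m ^2 * aSeq r^2 / aSeq (m+r)^2
      ≤ ((4*((m:ℝ)+1)/(π*(2*m+1)^2)) * (4*((r:ℝ)+1)/(π*(2*r+1)^2))) /
        (2/(π*(2*((m:ℝ)+r)+1))) := by
        apply div_le_div₀ (by positivity) hnum (by positivity) hnlow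
    _ = 8*((m:ℝ)+1)*((r:ℝ)+1)*(2*((m:ℝ)+(r:ℝ))+1) / (π*(2*m+1)^2*(2*r+1)^2) := by
        field_simp
        ring

lemma closing (m r : ℕ) (hm : 1 ≤ m) (hr : 1 ≤ r) :
    (8*((m:ℝ)+1)*((r:ℝ)+1)*(2*((m:ℝ)+(r:ℝ))+1) / (π*(2*m+1)^2*(2*r+1)^2)) *
      Bsq (2*m) (2*r) ≤ Bsq m r ^ 2 := by
  have hm1 : (1:ℝ) ≤ (m:ℝ) := by exact_mod_cast hm
  have hr1 : (1:ℝ) ≤ (r:ℝ) := by exact_mod_cast hr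
  unfold Bsq
  push_cast
  set M := (m:ℝ); set R := (r:ℝ)
  rw [div_pow, div_mul_div_comm, div_le_div_iff₀ (by positivity) (by positivity)]
  have cert : (2*(M+R)+1)*(2*M+1)^2*(2*R+1)^2 - 8*M*R*(M+1)*(R+1)*(4*(M+R)+1) =
      8*(M*(M+1))*(R*(R+1)) + (2*(M+R)+1)*(4*M*(M+1)+4*R*(R+1)+1) := by ring
  have key : (0:ℝ) ≤ (2*(M+R)+1)*(2*M+1)^2*(2*R+1)^2 - 8*M*R*(M+1)*(R+1)*(4*(M+R)+1) := by
    rw [cert]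
    have p1 : (0:ℝ) ≤ M*(M+1) := by nlinarith
    have p2 : (0:ℝ) ≤ R*(R+1) := by nlinarith
    nlinarith
  have c0 : (0:ℝ) ≤ 16*π^2*M*R*(2*(M+R)+1) := by positivity
  have h := mul_nonneg c0 key
  have e2 : 2*(2*M+2*R)+1 = 4*(M+R)+1 := by ring
  rw [e2]
  nlinarith [h]
open Real

lemma Bsq_pos (m r : ℕ) (hm : 1 ≤ m) (hr : 1 ≤ r) : 0 < Bsq m r := by
  have hm1 : (1:ℝ) ≤ (m:ℝ) := by exact_mod_cast hm
  have hr1 : (1:ℝ) ≤ (r:ℝ) := by exact_mod_cast hr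
  unfold Bsq
  have h1 : (0:ℝ) < 2*((m:ℝ)+r)+1 := by nlinarith
  have h2 : (0:ℝ) < 4*π*(m:ℝ)*(r:ℝ) :=
    mul_pos (mul_pos (mul_pos (by norm_num) pi_pos) (by linarith)) (by linarith)
  exact div_pos h1 h2

lemma key_bound (m r : ℕ) (hm : 1 ≤ m) (hr : 1 ≤ r) : bFun m r ^ 2 ≤ Bsq m r := by
  by_contra hcon
  push_neg at hcon
  set lam := bFun m r ^ 2 / Bsq m r with hlamdef
  have hBpos := Bsq_pos m r hm hr
  have hlam1 : 1 < lam := (one_lt_div hBpos).mpr hcon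
  have main : ∀ k : ℕ, lam ^ (2^k) * Bsq (2^k*m) (2^k*r) ≤ bFun (2^k*m) (2^k*r) ^ 2 := by
    intro k
    induction k with
    | zero =>
      simp only [pow_zero, pow_one, one_mul]
      rw [hlamdef, div_mul_cancel₀ _ hBpos.ne']
    | succ k ih =>
      set M := 2^k*m with hM
      set R := 2^k*r with hR
      have hM1 : 1 ≤ M := by
        have : 1 ≤ 2^k := Nat.one_le_two_pow
        calc 1 = 1*1 := by ring
          _ ≤ 2^k*m := Nat.mul_le_mul this hm
      have hR1 : 1 ≤ R := by
        have : 1 ≤ 2^k := Nat.one_le_two_pow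
        calc 1 = 1*1 := by ring
          _ ≤ 2^k*r := Nat.mul_le_mul this hr
      have hidx1 : 2^(k+1)*m = 2*M := by rw [hM]; ring
      have hidx2 : 2^(k+1)*r = 2*R := by rw [hR]; ring
      rw [hidx1, hidx2]
      have hrec := bFun_sq_eq M R hM1 hR1
      set rho := aSeq M * aSeq R / aSeq (M+R) with hrho
      have hrhopos : 0 < rho := by
        rw [hrho]
        have := aSeq_pos M; have := aSeq_pos R; have := aSeq_pos (M+R)
        positivity
      set UB := 8*((M:ℝ)+1)*((R:ℝ)+1)*(2*((M:ℝ)+(R:ℝ))+1) / (π*(2*M+1)^2*(2*R+1)^2) with hUB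
      have hUBpos : 0 < UB := by
        rw [hUB]
        have hM1' : (1:ℝ) ≤ (M:ℝ) := by exact_mod_cast hM1
        have hR1' : (1:ℝ) ≤ (R:ℝ) := by exact_mod_cast hR1
        have h1 : (0:ℝ) < (M:ℝ)+1 := by linarith
        have h2 : (0:ℝ) < (R:ℝ)+1 := by linarith
        have h3 : (0:ℝ) < 2*((M:ℝ)+(R:ℝ))+1 := by linarith
        have h4 : (0:ℝ) < 2*(M:ℝ)+1 := by linarith
        have h5 : (0:ℝ) < 2*(R:ℝ)+1 := by linarith
        have := pi_pos
        positivity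
      have hrho2 : rho^2 ≤ UB := rho_sq_le M R hM1 hR1
      -- squared identity
      have hsq : bFun M R ^ 4 = bFun (2*M) (2*R)^2 * rho^2 := by
        have := congrArg (fun x : ℝ => x^2) hrec
        simp only [mul_pow] at this
        calc bFun M R ^4 = (bFun M R ^2)^2 := by ring
          _ = bFun (2*M) (2*R)^2 * rho^2 := this
      -- chain
      have h1 : (lam ^ (2^k) * Bsq M R)^2 ≤ (bFun M R^2)^2 := by
        apply pow_le_pow_left₀ _ ih
        have hl0 : (0:ℝ) ≤ lam := by nlinarith
        have := Bsq_pos M R hM1 hR1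
        positivity
      have h2 : lam ^ (2^(k+1)) * (Bsq M R)^2 ≤ bFun (2*M) (2*R)^2 * rho^2 := by
        calc lam ^ (2^(k+1)) * (Bsq M R)^2 = (lam ^ (2^k) * Bsq M R)^2 := by
              rw [mul_pow, ← pow_mul, pow_succ]
          _ ≤ (bFun M R^2)^2 := h1
          _ = bFun M R ^4 := by ring
          _ = bFun (2*M) (2*R)^2 * rho^2 := hsq
      have h3 : bFun (2*M) (2*R)^2 * rho^2 ≤ bFun (2*M) (2*R)^2 * UB :=
        mul_le_mul_of_nonneg_left hrho2 (sq_nonneg _)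
      have h4 : UB * Bsq (2*M) (2*R) ≤ (Bsq M R)^2 := closing M R hM1 hR1
      -- conclude: lam^(2^(k+1)) * Bsq (2M)(2R) ≤ bFun(2M)(2R)^2
      have hlampow : (0:ℝ) < lam ^ (2^(k+1)) := by positivity
      have h5 : lam ^ (2^(k+1)) * (UB * Bsq (2*M) (2*R)) ≤ bFun (2*M) (2*R)^2 * UB := by
        calc lam ^ (2^(k+1)) * (UB * Bsq (2*M) (2*R)) ≤ lam ^ (2^(k+1)) * (Bsq M R)^2 :=
              mul_le_mul_of_nonneg_left h4 hlampow.le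
          _ ≤ bFun (2*M) (2*R)^2 * rho^2 := h2
          _ ≤ bFun (2*M) (2*R)^2 * UB := h3
      have := (mul_le_mul_iff_of_pos_right hUBpos).mp (by
        calc lam ^ (2^(k+1)) * Bsq (2*M) (2*R) * UB
            = lam ^ (2^(k+1)) * (UB * Bsq (2*M) (2*R)) := by ring
          _ ≤ bFun (2*M) (2*R)^2 * UB := h5)
      exact this
  -- upper bound on lam^(2^k)
  have bound : ∀ k : ℕ, lam ^ (2^k) ≤ 16*(m:ℝ)*(r:ℝ)*4^k := by
    intro k
    have hM1 : 1 ≤ 2^k*m := by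
      have : 1 ≤ 2^k := Nat.one_le_two_pow
      calc 1 = 1*1 := by ring
        _ ≤ 2^k*m := Nat.mul_le_mul this hm
    have hR1 : 1 ≤ 2^k*r := by
      have : 1 ≤ 2^k := Nat.one_le_two_pow
      calc 1 = 1*1 := by ring
        _ ≤ 2^k*r := Nat.mul_le_mul this hr
    have hb1 : bFun (2^k*m) (2^k*r) ^2 ≤ 1 := by
      have h := bFun_le_one (2^k*m) (2^k*r) (by omega)
      have h0 := bFun_nonneg (2^k*m) (2^k*r)
      nlinarith
    have hBk := Bsq_pos (2^k*m) (2^k*r) hM1 hR1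
    have hmain := le_trans (main k) hb1
    -- Bsq lower bound: Bsq (2^k m) (2^k r) ≥ 1/(16*m*r*4^k)
    have hm1 : (1:ℝ) ≤ (m:ℝ) := by exact_mod_cast hm
    have hr1 : (1:ℝ) ≤ (r:ℝ) := by exact_mod_cast hr
    have hm0 : (0:ℝ) < (m:ℝ) := by linarith
    have hr0 : (0:ℝ) < (r:ℝ) := by linarith
    have h4k : (0:ℝ) < (4:ℝ)^k := by positivity
    have h2k : (0:ℝ) < (2:ℝ)^k := by positivity
    have hden : (0:ℝ) < 16*(m:ℝ)*(r:ℝ)*4^k :=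
      mul_pos (mul_pos (mul_pos (by norm_num) hm0) hr0) h4k
    have hBlow : 1/(16*(m:ℝ)*(r:ℝ)*4^k) ≤ Bsq (2^k*m) (2^k*r) := by
      unfold Bsq
      push_cast
      have hden2 : (0:ℝ) < 4*π*(2^k*(m:ℝ))*(2^k*(r:ℝ)) :=
        mul_pos (mul_pos (mul_pos (by norm_num) pi_pos) (mul_pos h2k hm0)) (mul_pos h2k hr0)
      rw [div_le_div_iff₀ hden hden2]
      have hpile : π ≤ 4 := pi_le_four
      have he : (2:ℝ)^k*(2:ℝ)^k = 4^k := by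
        rw [← mul_pow]; norm_num
      have hnum : (1:ℝ) ≤ 2*(2^k*(m:ℝ)+2^k*(r:ℝ))+1 := by nlinarith
      calc 1*(4*π*(2^k*(m:ℝ))*(2^k*(r:ℝ)))
          = (4*π)*((m:ℝ)*(r:ℝ))*(2^k*2^k) := by ring
        _ ≤ (4*4)*((m:ℝ)*(r:ℝ))*(4^k) := by
            rw [he]
            apply mul_le_mul_of_nonneg_right _ (by positivity)
            apply mul_le_mul_of_nonneg_right _ (by positivity)
            linarith
        _ = 16*(m:ℝ)*(r:ℝ)*4^k := by ring
        _ ≤ (2*(2^k*(m:ℝ)+2^k*(r:ℝ))+1) * (16*(m:ℝ)*(r:ℝ)*4^k) := by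
            nlinarith [hden, hnum]

    have : lam ^ (2^k) * (1/(16*(m:ℝ)*(r:ℝ)*4^k)) ≤ 1 := by
      calc lam ^ (2^k) * (1/(16*(m:ℝ)*(r:ℝ)*4^k)) ≤ lam ^ (2^k) * Bsq (2^k*m) (2^k*r) := by
            apply mul_le_mul_of_nonneg_left hBlow (by positivity)
        _ ≤ 1 := hmain
    rw [mul_one_div, div_le_one hden] at this
    exact this
  -- contradiction
  obtain ⟨j0, hj0⟩ : ∃ j0 : ℕ, (1:ℝ)/(lam - 1) < 2^j0 := pow_unbounded_of_one_lt _ one_lt_two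
  have h2le : (2:ℝ) ≤ lam ^ (2^j0) := by
    have hb := one_add_mul_le_pow (by linarith : (-2:ℝ) ≤ lam - 1) (2^j0)
    have h1 : (1:ℝ) ≤ (2^j0 : ℕ) * (lam - 1) := by
      rw [div_lt_iff₀ (by linarith)] at hj0
      push_cast
      nlinarith
    have : 1 + ((2^j0:ℕ):ℝ) * (lam-1) ≤ lam ^ (2^j0) := by
      simpa using hb
    linarith
  set C := 16*m*r with hC
  have haux : ∀ K : ℕ, 3*K + 9 ≤ 2^(K+4) := by
    intro K
    have h3 : K < 2^K := Nat.lt_two_pow_self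
    have h2 : 2^(K+4) = 16*2^K := by ring
    omega
  set i := C + 2*j0 + 4 with hi
  have hnat : C + 2*j0 + 2*i + 1 ≤ 2^i := by
    have h := haux (C + 2*j0)
    rw [show C+2*j0+4 = i from hi.symm] at h
    omega
  have hup := bound (j0 + i)
  have hlow : (2:ℝ)^(2^i) ≤ lam ^ (2^(j0+i)) := by
    have e : 2^(j0+i) = 2^j0 * 2^i := pow_add 2 j0 i
    rw [e, pow_mul]
    exact pow_le_pow_left₀ (by norm_num) h2le _
  have hmid : (16*(m:ℝ)*(r:ℝ))*4^(j0+i) < (2:ℝ)^(2^i) := by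
    have hCle : ((C:ℕ):ℝ) ≤ 2^C := by
      exact_mod_cast (Nat.lt_two_pow_self (n := C)).le
    have he4 : (4:ℝ)^(j0+i) = 2^(2*(j0+i)) := by
      rw [show (4:ℝ) = 2^2 from by norm_num, ← pow_mul]
    have hC' : (16*(m:ℝ)*(r:ℝ)) = ((C:ℕ):ℝ) := by rw [hC]; push_cast; ring
    rw [hC', he4]
    calc ((C:ℕ):ℝ) * 2^(2*(j0+i)) ≤ 2^C * 2^(2*(j0+i)) := by
          apply mul_le_mul_of_nonneg_right hCle (by positivity)
      _ = 2^(C + 2*(j0+i)) := by rw [← pow_add]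
      _ < 2^(2^i) := by
          apply pow_lt_pow_right₀ (by norm_num)
          omega
  linarith

open Real

lemma aux_mono (f f' : ℝ → ℝ) (hderiv : ∀ x, 0 ≤ x → HasDerivAt f (f' x) x)
    (hpos : ∀ x, 0 ≤ x → 0 ≤ f' x) {u : ℝ} (hu : 0 ≤ u) : f 0 ≤ f u := by
  have hmono : MonotoneOn f (Set.Ici (0:ℝ)) := by
    apply monotoneOn_of_deriv_nonneg (convex_Ici 0)
    · exact fun x hx => (hderiv x hx).continuousAt.continuousWithinAt
    · intro x hx
      rw [interior_Ici] at hx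
      exact (hderiv x (le_of_lt hx)).differentiableAt.differentiableWithinAt
    · intro x hx
      rw [interior_Ici] at hx
      rw [(hderiv x (le_of_lt hx)).deriv]
      exact hpos x (le_of_lt hx)
  exact hmono Set.self_mem_Ici hu hu

lemma hasDerivAt_log1p {x : ℝ} (hx : 0 ≤ x) :
    HasDerivAt (fun y : ℝ => Real.log (1 + y)) (1/(1+x)) x := by
  have h1 : HasDerivAt (fun y : ℝ => 1 + y) 1 x := (hasDerivAt_id x).const_add 1
  simpa using h1.log (by positivity)

lemma log_le_S3 {u : ℝ} (hu : 0 ≤ u) : Real.log (1+u) ≤ u - u^2/2 + u^3/3 := by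
  have h := aux_mono (fun x => x - x^2/2 + x^3/3 - Real.log (1+x))
      (fun x => 1 - x + x^2 - 1/(1+x)) ?_ ?_ hu
  · simpa using h
  · intro x hx
    have h1 : HasDerivAt (fun y : ℝ => y - y^2/2 + y^3/3) (1 - x + x^2) x := by
      have := ((hasDerivAt_id x).sub (((hasDerivAt_pow 2 x)).div_const 2)).add
        (((hasDerivAt_pow 3 x)).div_const 3)
      exact this.congr_deriv (by norm_num)
    exact h1.sub (hasDerivAt_log1p hx)
  · intro x hx
    have h2 : (0:ℝ) < 1 + x := by linarith
    rw [sub_nonneg, div_le_iff₀ h2]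
    nlinarith [pow_nonneg hx 3]

lemma log_le_S7 {u : ℝ} (hu : 0 ≤ u) :
    Real.log (1+u) ≤ u - u^2/2 + u^3/3 - u^4/4 + u^5/5 - u^6/6 + u^7/7 := by
  have h := aux_mono
      (fun x => x - x^2/2 + x^3/3 - x^4/4 + x^5/5 - x^6/6 + x^7/7 - Real.log (1+x))
      (fun x => 1 - x + x^2 - x^3 + x^4 - x^5 + x^6 - 1/(1+x)) ?_ ?_ hu
  · simpa using h
  · intro x hx
    have h1 : HasDerivAt (fun y : ℝ => y - y^2/2 + y^3/3 - y^4/4 + y^5/5 - y^6/6 + y^7/7)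
        (1 - x + x^2 - x^3 + x^4 - x^5 + x^6) x := by
      have := ((((((((hasDerivAt_id x).sub ((hasDerivAt_pow 2 x).div_const 2)).add
        ((hasDerivAt_pow 3 x).div_const 3)).sub ((hasDerivAt_pow 4 x).div_const 4)).add
        ((hasDerivAt_pow 5 x).div_const 5)).sub ((hasDerivAt_pow 6 x).div_const 6)).add
        ((hasDerivAt_pow 7 x).div_const 7)))
      exact this.congr_deriv (by norm_num)
    exact h1.sub (hasDerivAt_log1p hx)
  · intro x hx
    have h2 : (0:ℝ) < 1 + x := by linarith
    rw [sub_nonneg, div_le_iff₀ h2]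
    nlinarith [pow_nonneg hx 7]

lemma S4_le_log {u : ℝ} (hu : 0 ≤ u) :
    u - u^2/2 + u^3/3 - u^4/4 ≤ Real.log (1+u) := by
  have h := aux_mono
      (fun x => Real.log (1+x) - (x - x^2/2 + x^3/3 - x^4/4))
      (fun x => 1/(1+x) - (1 - x + x^2 - x^3)) ?_ ?_ hu
  · simp only [Real.log_one, add_zero] at h
    have : Real.log 1 - 0 ≤ Real.log (1+u) - (u - u^2/2 + u^3/3 - u^4/4) := by
      simpa using h
    simp [Real.log_one] at this; linarith
  · intro x hx
    have h1 : HasDerivAt (fun y : ℝ => y - y^2/2 + y^3/3 - y^4/4) (1 - x + x^2 - x^3) x := by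
      have := (((hasDerivAt_id x).sub ((hasDerivAt_pow 2 x).div_const 2)).add
        ((hasDerivAt_pow 3 x).div_const 3)).sub ((hasDerivAt_pow 4 x).div_const 4)
      exact this.congr_deriv (by norm_num)
    exact (hasDerivAt_log1p hx).sub h1
  · intro x hx
    have h2 : (0:ℝ) < 1 + x := by linarith
    rw [sub_nonneg, le_div_iff₀ h2]
    nlinarith [pow_nonneg hx 4]
open Real

lemma cn_le {x : ℝ} (hx : 5 ≤ x) :
    1/x - 2/(3*x^2) + 1/(2*x^3) - 1/(2*x+2) ≤ 47/500 := by
  have hx0 : (0:ℝ) < x := by linarith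
  have hx1 : (0:ℝ) < 2*x+2 := by linarith
  have hcube : (0:ℝ) ≤ 282*x^3 + 192*x^2 - 40*x + 300 := by nlinarith
  have hfac : (0:ℝ) ≤ (x-5) * (282*x^3 + 192*x^2 - 40*x + 300) :=
    mul_nonneg (by linarith) hcube
  have h2 : 1/x - 2/(3*x^2) + 1/(2*x^3) - 1/(2*x+2) - 47/500 =
      -(((x-5)*(282*x^3 + 192*x^2 - 40*x + 300)) / (3000*x^3*(x+1))) := by
    rw [← neg_div]
    field_simp
    ring
  have h3 := div_nonneg hfac (by positivity : (0:ℝ) ≤ 3000*x^3*(x+1))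
  linarith

lemma Apart_le {u K : ℝ} (hu0 : 0 ≤ u) (hu1 : u ≤ 1) (hK0 : 0 < K) (hK : K ≤ 1/2) :
    u*K - u^2*K - u^2*K^2/2 + 2*u^3*K^2/3 + u^3*K^3/3 ≤ u*(1-u)*K + 5/6*u^3*K^2 := by
  have h1 : u^3*K^3/3 ≤ u^3*K^2/6 := by
    have : K^2*(K - 1/2) ≤ 0 := mul_nonpos_of_nonneg_of_nonpos (sq_nonneg K) (by linarith)
    have hu3 : 0 ≤ u^3 := by positivity
    nlinarith
  have h2 : (0:ℝ) ≤ u^2*K^2/2 := by positivity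
  nlinarith

lemma EA {t M R : ℝ} (ht0 : 0 ≤ t) (ht1 : t ≤ 1) (hM0 : 0 < M) (hM : M ≤ 1/2)
    (hR0 : 0 < R) (hR : R ≤ 1/3) :
    (t*M - t^2*M - t^2*M^2/2 + 2*t^3*M^2/3 + t^3*M^3/3)
      + ((1-t)*R - (1-t)^2*R - (1-t)^2*R^2/2 + 2*(1-t)^3*R^2/3 + (1-t)^3*R^3/3)
      ≤ 42/125 := by
  have hA := Apart_le ht0 ht1 hM0 hM
  have hB := Apart_le (u := 1-t) (by linarith) (by linarith) hR0 (by linarith)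
  have hs0 : (0:ℝ) ≤ 1 - t := by linarith
  have htt : 0 ≤ t*(1-t) := mul_nonneg ht0 hs0
  have h1 : t*(1-t)*M ≤ t*(1-t)*(1/2) := mul_le_mul_of_nonneg_left hM htt
  have h2 : (1-t)*(1-(1-t))*R ≤ t*(1-t)*(1/3) := by
    have : (1-t)*(1-(1-t)) = t*(1-t) := by ring
    rw [this]
    exact mul_le_mul_of_nonneg_left hR htt
  have h3 : 5/6*t^3*M^2 ≤ 5/24*t^3 := by
    have hM2 : M^2 ≤ 1/4 := by nlinarith
    have : 0 ≤ t^3 := by positivity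
    nlinarith
  have h4 : 5/6*(1-t)^3*R^2 ≤ 5/54*(1-t)^3 := by
    have hR2 : R^2 ≤ 1/9 := by nlinarith
    have : 0 ≤ (1-t)^3 := by positivity
    nlinarith
  have hfinal : 5/6*(t*(1-t)) + 5/24*t^3 + 5/54*(1-t)^3 ≤ 42/125 := by
    nlinarith [sq_nonneg (t - 1/2), sq_nonneg t, sq_nonneg (1-t), htt,
      mul_nonneg htt ht0, mul_nonneg htt hs0]
  linarith [hA, hB, h1, h2, h3, h4, hfinal]
open Real

lemma EB1 {t : ℝ} (ht0 : 0 ≤ t) (ht1 : t ≤ 1) :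
    (3*(t - t^2/2 + t^3/3 - t^4/4 + t^5/5 - t^6/6 + t^7/7) - 2*t)
      + (t*(1-t)*(1/4) + 5/96*(1-t)^3) ≤ 42/125 := by
  nlinarith [sq_nonneg (t - 1/2), mul_nonneg ht0 (sub_nonneg.mpr ht1),
    mul_nonneg (mul_nonneg ht0 ht0) (sub_nonneg.mpr ht1),
    mul_nonneg (mul_nonneg (mul_nonneg ht0 ht0) ht0) (sub_nonneg.mpr ht1),
    sq_nonneg (t^2 - t), sq_nonneg (t^3 - t^2), sq_nonneg (t^3-t),
    mul_nonneg (mul_nonneg (mul_nonneg (mul_nonneg ht0 ht0) ht0) ht0) (sub_nonneg.mpr ht1),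
    pow_le_one₀ ht0 ht1 (n := 3), pow_le_one₀ ht0 ht1 (n := 5),
    mul_nonneg (pow_nonneg ht0 5) (sub_nonneg.mpr ht1),
    mul_nonneg (pow_nonneg ht0 4) (sq_nonneg (1-t)),
    mul_nonneg (pow_nonneg ht0 5) (sq_nonneg (1-t))]
open Real

set_option maxHeartbeats 1000000

lemma two_exp_le_pi : 2*Real.exp (43/100) ≤ π := by
  have hb := Real.exp_bound (x := (43/100:ℝ)) (by rw [abs_of_nonneg (by norm_num)]; norm_num)
    (by norm_num : 0 < 4)
  have h1 := (abs_le.mp hb).2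
  rw [Finset.sum_range_succ, Finset.sum_range_succ, Finset.sum_range_succ, Finset.sum_range_succ,
    Finset.sum_range_zero] at h1
  rw [abs_of_nonneg (by norm_num : (0:ℝ) ≤ 43/100)] at h1
  simp only [Nat.factorial, Nat.succ_eq_add_one] at h1
  norm_num at h1
  have hpi : (3.14:ℝ) < π := Real.pi_gt_d2
  norm_num at hpi
  nlinarith [h1, hpi]

lemma exp_aux {u : ℝ} (hu : 0 ≤ u) : 1 + u ≤ Real.exp (u - u^2/2 + u^3/3) := by
  have h := log_le_S3 hu
  calc 1 + u = Real.exp (Real.log (1+u)) := (Real.exp_log (by linarith)).symm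
    _ ≤ _ := Real.exp_le_exp.mpr h

lemma exp_aux7 {u : ℝ} (hu : 0 ≤ u) :
    1 + u ≤ Real.exp (u - u^2/2 + u^3/3 - u^4/4 + u^5/5 - u^6/6 + u^7/7) := by
  have h := log_le_S7 hu
  calc 1 + u = Real.exp (Real.log (1+u)) := (Real.exp_log (by linarith)).symm
    _ ≤ _ := Real.exp_le_exp.mpr h

lemma exp_aux4 {v : ℝ} (hv : 0 ≤ v) : Real.exp (v - v^2/2 + v^3/3 - v^4/4) ≤ 1 + v := by
  have h := S4_le_log hv
  calc Real.exp (v - v^2/2 + v^3/3 - v^4/4) ≤ Real.exp (Real.log (1+v)) := Real.exp_le_exp.mpr h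
    _ = 1 + v := Real.exp_log (by linarith)

lemma core_ineq (m r : ℕ) (t : ℝ) (hm : 1 ≤ m) (hr3 : 3 ≤ r) (hn5 : 5 ≤ m + r)
    (ht0 : 0 ≤ t) (ht1 : t ≤ 1) :
    (2*((m:ℝ)+r)+1)/((m:ℝ)+r+1) * ((1+t/m)^(2*m+1) *
      ((1+(1-t)/r)^(2*r+1) * (((m:ℝ)+r)/((m:ℝ)+r+1))^(2*(m+r)))) ≤ π := by
  have hm1 : (1:ℝ) ≤ (m:ℝ) := by exact_mod_cast hm
  have hr1 : (3:ℝ) ≤ (r:ℝ) := by exact_mod_cast hr3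
  have hm0 : (0:ℝ) < m := by linarith
  have hr0 : (0:ℝ) < r := by linarith
  have hn : (5:ℝ) ≤ (m:ℝ)+r := by
    have : ((5:ℕ):ℝ) ≤ ((m+r:ℕ):ℝ) := by exact_mod_cast hn5
    push_cast at this; linarith
  have hnpos : (0:ℝ) < (m:ℝ)+r := by linarith
  have hs0 : (0:ℝ) ≤ 1 - t := by linarith
  have htm : (0:ℝ) ≤ t/m := div_nonneg ht0 hm0.le
  have hsr : (0:ℝ) ≤ (1-t)/r := div_nonneg hs0 hr0.le
  set E1 : ℝ := -(1/(2*((m:ℝ)+r)+2)) with hE1def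
  set E3 : ℝ := (2*(r:ℝ)+1) * ((1-t)/r - ((1-t)/r)^2/2 + ((1-t)/r)^3/3) with hE3def
  set E4 : ℝ := -(2*((m:ℝ)+r) * (1/((m:ℝ)+r) - (1/((m:ℝ)+r))^2/2 + (1/((m:ℝ)+r))^3/3
    - (1/((m:ℝ)+r))^4/4)) with hE4def
  have hF1 : (2*((m:ℝ)+r)+1)/((m:ℝ)+r+1) ≤ 2*Real.exp E1 := by
    have hx := Real.add_one_le_exp (-(1/(2*((m:ℝ)+r)+2)))
    have he : (2*((m:ℝ)+r)+1)/((m:ℝ)+r+1) = 2*(1 - 1/(2*((m:ℝ)+r)+2)) := by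
      field_simp; ring
    rw [he, hE1def]
    have := Real.exp_pos (-(1/(2*((m:ℝ)+r)+2)))
    linarith
  have hF3 : (1+(1-t)/r)^(2*r+1) ≤ Real.exp E3 := by
    have hbase := exp_aux hsr
    calc (1+(1-t)/r)^(2*r+1)
        ≤ (Real.exp ((1-t)/r - ((1-t)/r)^2/2 + ((1-t)/r)^3/3))^(2*r+1) :=
          pow_le_pow_left₀ (by linarith) hbase _
      _ = Real.exp E3 := by
          rw [← Real.exp_nat_mul, hE3def]
          congr 1
          push_cast
          ring
  have hF4 : (((m:ℝ)+r)/((m:ℝ)+r+1))^(2*(m+r)) ≤ Real.exp E4 := by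
    have hv0 : (0:ℝ) ≤ 1/((m:ℝ)+r) := by positivity
    have hbase : ((m:ℝ)+r)/((m:ℝ)+r+1) ≤
        Real.exp (-(1/((m:ℝ)+r) - (1/((m:ℝ)+r))^2/2 + (1/((m:ℝ)+r))^3/3
          - (1/((m:ℝ)+r))^4/4)) := by
      have h1 := exp_aux4 hv0
      have h2 : ((m:ℝ)+r)/((m:ℝ)+r+1) = 1/(1+1/((m:ℝ)+r)) := by
        field_simp
      rw [h2, Real.exp_neg, ← one_div]
      exact one_div_le_one_div_of_le (Real.exp_pos _) h1
    calc (((m:ℝ)+r)/((m:ℝ)+r+1))^(2*(m+r))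
        ≤ (Real.exp (-(1/((m:ℝ)+r) - (1/((m:ℝ)+r))^2/2 + (1/((m:ℝ)+r))^3/3
            - (1/((m:ℝ)+r))^4/4)))^(2*(m+r)) :=
          pow_le_pow_left₀ (by positivity) hbase _
      _ = Real.exp E4 := by
          rw [← Real.exp_nat_mul, hE4def]
          congr 1
          push_cast
          ring
  have e14 : E1 + E4 =
      (1/((m:ℝ)+r) - 2/(3*((m:ℝ)+r)^2) + 1/(2*((m:ℝ)+r)^3) - 1/(2*((m:ℝ)+r)+2)) - 2 := by
    rw [hE1def, hE4def]
    field_simp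
    ring
  have e3' : E3 = (1-t)*(1/(r:ℝ)) - (1-t)^2*(1/(r:ℝ)) - (1-t)^2*(1/(r:ℝ))^2/2
        + 2*(1-t)^3*(1/(r:ℝ))^2/3 + (1-t)^3*(1/(r:ℝ))^3/3 + 2*(1-t) := by
    rw [hE3def]
    field_simp
    ring
  have hc := cn_le hn
  have hR0 : (0:ℝ) < 1/(r:ℝ) := by positivity
  have hR3 : 1/(r:ℝ) ≤ 1/3 := by
    rw [div_le_div_iff₀ hr0 (by norm_num)]; linarith
  obtain ⟨E2, hF2, hEsum⟩ :
      ∃ E2, (1+t/(m:ℝ))^(2*m+1) ≤ Real.exp E2 ∧ E1+E2+E3+E4 ≤ 43/100 := by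
    rcases eq_or_lt_of_le hm with hm1' | hm2
    · -- m = 1
      have hmeq : m = 1 := hm1'.symm
      have hr4 : 4 ≤ r := by omega
      have hr4' : (4:ℝ) ≤ (r:ℝ) := by exact_mod_cast hr4
      have hR4 : 1/(r:ℝ) ≤ 1/4 := by
        rw [div_le_div_iff₀ hr0 (by norm_num)]; linarith
      refine ⟨3*(t - t^2/2 + t^3/3 - t^4/4 + t^5/5 - t^6/6 + t^7/7), ?_, ?_⟩
      · have hbase := exp_aux7 ht0
        have hcast : ((m:ℝ)) = 1 := by rw [hmeq]; norm_num
        rw [hcast, div_one, hmeq]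
        calc (1+t)^(2*1+1) = (1+t)^3 := by norm_num
          _ ≤ (Real.exp (t - t^2/2 + t^3/3 - t^4/4 + t^5/5 - t^6/6 + t^7/7))^3 :=
              pow_le_pow_left₀ (by linarith) hbase _
          _ = _ := by
              rw [← Real.exp_nat_mul]
              norm_num
      · have hA := Apart_le (u := 1-t) (K := 1/(r:ℝ)) hs0 (by linarith) hR0 (by linarith)
        have hmono : (1-t)*(1-(1-t))*(1/(r:ℝ)) + 5/6*(1-t)^3*(1/(r:ℝ))^2 ≤
            t*(1-t)*(1/4) + 5/96*(1-t)^3 := by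
          have h1 : (1-t)*(1-(1-t))*(1/(r:ℝ)) ≤ t*(1-t)*(1/4) := by
            have he : (1-t)*(1-(1-t))*(1/(r:ℝ)) = t*(1-t)*(1/(r:ℝ)) := by ring
            rw [he]
            exact mul_le_mul_of_nonneg_left hR4 (mul_nonneg ht0 hs0)
          have h2 : 5/6*(1-t)^3*(1/(r:ℝ))^2 ≤ 5/96*(1-t)^3 := by
            have hsq : (1/(r:ℝ))^2 ≤ 1/16 := by nlinarith
            have h3 : (0:ℝ) ≤ (1-t)^3 := by positivity
            nlinarith
          linarith
        have hEB := EB1 ht0 ht1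
        have hmr1 : (m:ℝ) = 1 := by rw [hmeq]; norm_num
        have e14' := e14
        rw [hmr1] at e14'
        have hcc : 1/(1+(r:ℝ)) - 2/(3*(1+(r:ℝ))^2) + 1/(2*(1+(r:ℝ))^3) - 1/(2*(1+(r:ℝ))+2)
            ≤ 47/500 := by
          have := cn_le (x := 1+(r:ℝ)) (by linarith)
          linarith
        linarith [hA, hmono, hEB, hcc, e14', e3']
    · -- m ≥ 2
      have hm2' : (2:ℝ) ≤ (m:ℝ) := by exact_mod_cast hm2
      have hM2 : 1/(m:ℝ) ≤ 1/2 := by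
        rw [div_le_div_iff₀ hm0 (by norm_num)]; linarith
      have hM0 : (0:ℝ) < 1/(m:ℝ) := by positivity
      refine ⟨(2*(m:ℝ)+1) * (t/m - (t/m)^2/2 + (t/m)^3/3), ?_, ?_⟩
      · have hbase := exp_aux htm
        calc (1+t/(m:ℝ))^(2*m+1)
            ≤ (Real.exp (t/m - (t/m)^2/2 + (t/m)^3/3))^(2*m+1) :=
              pow_le_pow_left₀ (by linarith) hbase _
          _ = _ := by
              rw [← Real.exp_nat_mul]
              congr 1
              push_cast
              ring
      · have e2' : (2*(m:ℝ)+1) * (t/m - (t/m)^2/2 + (t/m)^3/3) =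
            t*(1/(m:ℝ)) - t^2*(1/(m:ℝ)) - t^2*(1/(m:ℝ))^2/2
              + 2*t^3*(1/(m:ℝ))^2/3 + t^3*(1/(m:ℝ))^3/3 + 2*t := by
          field_simp
          ring
        have hEA := EA ht0 ht1 hM0 hM2 hR0 hR3
        linarith [hEA, hc, e2', e3', e14]
  -- assembly
  have hp1 : (0:ℝ) ≤ 1 + t/(m:ℝ) := by linarith
  have hp3 : (0:ℝ) ≤ 1 + (1-t)/(r:ℝ) := by linarith
  have hp4 : (0:ℝ) ≤ ((m:ℝ)+r)/((m:ℝ)+r+1) := by positivity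
  calc (2*((m:ℝ)+r)+1)/((m:ℝ)+r+1) * ((1+t/m)^(2*m+1) *
        ((1+(1-t)/r)^(2*r+1) * (((m:ℝ)+r)/((m:ℝ)+r+1))^(2*(m+r))))
      ≤ (2*Real.exp E1) * (Real.exp E2 * (Real.exp E3 * Real.exp E4)) := by
        apply mul_le_mul hF1 _ _ (by positivity)
        · apply mul_le_mul hF2 _ _ (Real.exp_pos _).le
          · exact mul_le_mul hF3 hF4 (pow_nonneg hp4 _) (Real.exp_pos _).le
          · exact mul_nonneg (pow_nonneg hp3 _) (pow_nonneg hp4 _)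
        · exact mul_nonneg (pow_nonneg hp1 _)
            (mul_nonneg (pow_nonneg hp3 _) (pow_nonneg hp4 _))
    _ = 2*Real.exp (E1+E2+E3+E4) := by
        rw [Real.exp_add, Real.exp_add, Real.exp_add]
        ring
    _ ≤ 2*Real.exp (43/100) :=
        mul_le_mul_of_nonneg_left (Real.exp_le_exp.mpr hEsum) (by norm_num)
    _ ≤ π := two_exp_le_pi
lemma sm48 (p : ℝ) (hp0 : 0 < p) (hp : p < 1/2) : 48*p^3*(1-p)^3 ≤ 1 := by
  nlinarith [sq_nonneg (2*p-1), sq_nonneg p, mul_pos hp0 (by linarith : (0:ℝ) < 1-p),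
    sq_nonneg (p*(1-p) - 1/4), sq_nonneg (p*(1-p))]
lemma sm144 (p : ℝ) (hp0 : 0 < p) (hp : p < 1/2) : 144*p^3*(1-p)^5 ≤ 1 := by
  nlinarith [sq_nonneg (2*p-1), sq_nonneg p, mul_pos hp0 (by linarith : (0:ℝ) < 1-p),
    sq_nonneg (p - 3/8), sq_nonneg (p*(1-p) - 1/4), sq_nonneg (p*(1-p)),
    mul_nonneg (sq_nonneg (p - 3/8)) (sq_nonneg (1-p)), sq_nonneg (p^2*(1-p)^2)]
lemma sm320 (p : ℝ) (hp0 : 0 < p) (hp : p < 1/2) : 320*p^3*(1-p)^7 ≤ 1 := by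
  nlinarith [sq_nonneg (2*p-1), sq_nonneg p, mul_pos hp0 (by linarith : (0:ℝ) < 1-p),
    sq_nonneg (p - 3/10), sq_nonneg (p*(1-p) - 1/4), sq_nonneg (p*(1-p)),
    mul_nonneg (sq_nonneg (p - 3/10)) (sq_nonneg (1-p)), sq_nonneg (p^2*(1-p)^2),
    mul_nonneg (mul_nonneg (sq_nonneg (p - 3/10)) (sq_nonneg (1-p))) (sq_nonneg (1-p))]
lemma sm720 (p : ℝ) (hp0 : 0 < p) (hp : p < 1/2) : 720*p^5*(1-p)^5 ≤ 1 := by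
  have h1 : p*(1-p) ≤ 1/4 := by nlinarith [sq_nonneg (2*p-1)]
  have h0 : 0 < p*(1-p) := mul_pos hp0 (by linarith)
  have h5 : (p*(1-p))^5 ≤ (1/4)^5 := pow_le_pow_left₀ h0.le h1 5
  nlinarith [h5]
lemma m0_bound (n : ℕ) (p : ℝ) (hn : 1 ≤ n) (hp0 : 0 < p) (hp : p < 1/2) :
    ((1-p)^n)^2 * (4*((n:ℝ)+1)*p*(1-p)) ≤ 1 := by
  have hq0 : (0:ℝ) < 1 - p := by linarith
  have hqe : (1-p) ≤ Real.exp (-p) := by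
    have := Real.add_one_le_exp (-p); linarith
  have h1 : ((1-p)^n)^2*(1-p) = (1-p)^(2*n+1) := by
    rw [← pow_mul, ← pow_succ, Nat.mul_comm]
  have h2 : (1-p)^(2*n+1) ≤ Real.exp (-((2*(n:ℝ)+1)*p)) := by
    calc (1-p)^(2*n+1) ≤ (Real.exp (-p))^(2*n+1) := pow_le_pow_left₀ hq0.le hqe _
      _ = Real.exp (-((2*(n:ℝ)+1)*p)) := by
          rw [← Real.exp_nat_mul]
          congr 1
          push_cast
          ring
  have hn1 : (1:ℝ) ≤ (n:ℝ) := by exact_mod_cast hn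
  have h3 : 4*((n:ℝ)+1)*p ≤ Real.exp ((2*(n:ℝ)+1)*p) := by
    have he1 : (2*(n:ℝ)+1)*p ≤ Real.exp ((2*(n:ℝ)+1)*p - 1) := by
      have := Real.add_one_le_exp ((2*(n:ℝ)+1)*p - 1); linarith
    have he2 : Real.exp ((2*(n:ℝ)+1)*p - 1) * Real.exp 1 = Real.exp ((2*(n:ℝ)+1)*p) := by
      rw [← Real.exp_add]; ring_nf
    have hee : (8/3:ℝ) ≤ Real.exp 1 := by
      have := Real.exp_one_gt_d9; linarith
    have hx0 : (0:ℝ) < (2*(n:ℝ)+1)*p := by positivity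
    calc 4*((n:ℝ)+1)*p ≤ (8/3)*((2*(n:ℝ)+1)*p) := by nlinarith
      _ ≤ Real.exp ((2*(n:ℝ)+1)*p - 1) * Real.exp 1 := by
          have h4 := Real.exp_pos ((2*(n:ℝ)+1)*p - 1)
          nlinarith [mul_le_mul he1 hee (by norm_num) h4.le]
      _ = _ := he2
  calc ((1-p)^n)^2 * (4*((n:ℝ)+1)*p*(1-p)) = (4*((n:ℝ)+1)*p) * ((1-p)^(2*n+1)) := by
        rw [← h1]; ring
    _ ≤ (4*((n:ℝ)+1)*p) * Real.exp (-((2*(n:ℝ)+1)*p)) := by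
        apply mul_le_mul_of_nonneg_left h2 (by positivity)
    _ ≤ 1 := by
        rw [Real.exp_neg]
        have h5 := Real.exp_pos ((2*(n:ℝ)+1)*p)
        rw [mul_inv_le_iff₀ h5, one_mul]
        exact h3
open Real

lemma mu_eq_bG (m r : ℕ) (p : ℝ) (hm : 1 ≤ m) (hr : 1 ≤ r) :
    ((m+r).choose m : ℝ) * p^m * (1-p)^r =
      bFun m r * ((((m:ℝ)+r)*p/m)^m * ((((m:ℝ)+r)*(1-p))/r)^r) := by
  have hm0 : (0:ℝ) < m := by exact_mod_cast hm
  have hr0 : (0:ℝ) < r := by exact_mod_cast hr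
  have hn0 : (0:ℝ) < (m:ℝ)+r := by linarith
  unfold bFun
  rw [div_pow, div_pow, mul_pow, mul_pow]
  rw [pow_add ((m:ℝ)+r) m r]
  field_simp

lemma central_main (n m : ℕ) (p : ℝ) (hp0 : 0 < p) (hp : p < 1/2) (hn5 : 5 ≤ n)
    (hm1 : 1 ≤ m) (h2m : 2*m ≤ n)
    (hm_le : (m:ℝ) ≤ ((n:ℝ)+1)*p) (hm_gt : ((n:ℝ)+1)*p < (m:ℝ)+1) :
    ((n.choose m : ℝ) * p^m * (1-p)^(n-m))^2 * (4*((n:ℝ)+1)*p*(1-p)) ≤ 1 := by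
  set r := n - m with hrdef
  have hnr : n = m + r := by omega
  have hr3 : 3 ≤ r := by omega
  have hr1 : 1 ≤ r := by omega
  have hm0 : (0:ℝ) < m := by exact_mod_cast hm1
  have hr0 : (0:ℝ) < r := by
    have : (1:ℝ) ≤ (r:ℝ) := by exact_mod_cast hr1
    linarith
  have hncast : (n:ℝ) = (m:ℝ)+r := by rw [hnr]; push_cast; ring
  have hq0 : (0:ℝ) < 1-p := by linarith
  set t : ℝ := ((n:ℝ)+1)*p - m with htdef
  have ht0 : 0 ≤ t := by rw [htdef]; linarith
  have ht1 : t ≤ 1 := by rw [htdef]; linarith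
  have hNpos : (0:ℝ) < (m:ℝ)+r+1 := by linarith
  have hpe : p = ((m:ℝ)+t)/((m:ℝ)+r+1) := by
    rw [htdef, hncast]
    field_simp
    ring
  have hqe : 1-p = ((r:ℝ)+(1-t))/((m:ℝ)+r+1) := by
    rw [htdef, hncast]
    field_simp
    ring
  -- μ = bFun * G
  have hmu := mu_eq_bG m r p hm1 hr1
  rw [← hnr] at hmu
  rw [← hncast] at hmu
  rw [hmu]
  -- key bound
  have hkey := key_bound m r hm1 hr1
  have hb1 : ((n:ℝ)*p/m) = (((m:ℝ)+r)/((m:ℝ)+r+1))*(1+t/m) := by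
    rw [hncast, hpe]
    field_simp
    try ring
  have hb2 : ((n:ℝ)*(1-p)/r) = (((m:ℝ)+r)/((m:ℝ)+r+1))*(1+(1-t)/r) := by
    rw [hncast, hqe]
    field_simp
    try ring
  set G : ℝ := (((n:ℝ)*p/m)^m * (((n:ℝ)*(1-p))/r)^r) with hGdef
  have hGsq : G^2 = ((((m:ℝ)+r)/((m:ℝ)+r+1))^(2*(m+r))) * ((1+t/m)^(2*m) * (1+(1-t)/r)^(2*r)) := by
    have hsplit : (((m:ℝ)+r)/((m:ℝ)+r+1))^(2*(m+r)) =
        (((m:ℝ)+r)/((m:ℝ)+r+1))^(2*m) * (((m:ℝ)+r)/((m:ℝ)+r+1))^(2*r) := by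
      rw [← pow_add]
      congr 1
      ring
    rw [hGdef, mul_pow, ← pow_mul, ← pow_mul, hb1, hb2, mul_pow, mul_pow, hsplit]
    ring
  have hGsqnn : 0 ≤ G^2 := sq_nonneg _
  have step1 : (bFun m r * G)^2 * (4*((n:ℝ)+1)*p*(1-p)) ≤
      Bsq m r * G^2 * (4*((n:ℝ)+1)*p*(1-p)) := by
    have h4 : (0:ℝ) ≤ 4*((n:ℝ)+1)*p*(1-p) := by
      have : (0:ℝ) < (n:ℝ)+1 := by rw [hncast]; linarith
      positivity
    rw [mul_pow]
    apply mul_le_mul_of_nonneg_right _ h4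
    exact mul_le_mul_of_nonneg_right hkey hGsqnn
  apply le_trans step1
  -- the identity
  have hid : Bsq m r * G^2 * (4*((n:ℝ)+1)*p*(1-p)) =
      (1/π) * ((2*((m:ℝ)+r)+1)/((m:ℝ)+r+1) * ((1+t/m)^(2*m+1) *
        ((1+(1-t)/r)^(2*r+1) * ((((m:ℝ)+r)/((m:ℝ)+r+1))^(2*(m+r)))))) := by
    rw [hGsq]
    unfold Bsq
    rw [hncast, hqe, hpe]
    rw [pow_succ (1+t/m) (2*m), pow_succ (1+(1-t)/r) (2*r)]
    have hmne : ((m:ℝ)) ≠ 0 := hm0.ne'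
    have hrne : ((r:ℝ)) ≠ 0 := hr0.ne'
    have hNne : ((m:ℝ)+r+1) ≠ 0 := hNpos.ne'
    have hpine := pi_pos.ne'
    field_simp
  rw [hid]
  have hcore := core_ineq m r t hm1 hr3 (by omega) ht0 ht1
  calc (1/π) * ((2*((m:ℝ)+r)+1)/((m:ℝ)+r+1) * ((1+t/m)^(2*m+1) *
        ((1+(1-t)/r)^(2*r+1) * ((((m:ℝ)+r)/((m:ℝ)+r+1))^(2*(m+r)))))) ≤ (1/π) * π := by
        apply mul_le_mul_of_nonneg_left hcore (by positivity)
    _ = 1 := by field_simp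
open Real

lemma pmf_mode_sq (n m : ℕ) (p : ℝ) (hn1 : 1 ≤ n) (hp0 : 0 < p) (hp : p < 1/2)
    (hm_le : (m:ℝ) ≤ ((n:ℝ)+1)*p) (hm_gt : ((n:ℝ)+1)*p < (m:ℝ)+1) :
    ((n.choose m : ℝ) * p^m * (1-p)^(n-m))^2 * (4*((n:ℝ)+1)*p*(1-p)) ≤ 1 := by
  have hn0 : (0:ℝ) ≤ (n:ℝ) := Nat.cast_nonneg n
  have h2m : 2*m ≤ n := by
    have h1 : 2*(m:ℝ) < (n:ℝ)+1 := by nlinarith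
    have h2 : ((2*m:ℕ):ℝ) < ((n+1:ℕ):ℝ) := by push_cast; linarith
    have h3 : 2*m < n+1 := by exact_mod_cast h2
    omega
  rcases Nat.eq_zero_or_pos m with hm0 | hm1
  · subst hm0
    simp only [Nat.choose_zero_right, pow_zero, Nat.cast_one, one_mul, Nat.sub_zero, mul_one]
    exact m0_bound n p hn1 hp0 hp
  · rcases le_or_gt 5 n with hn5 | hn4
    · exact central_main n m p hp0 hp hn5 hm1 h2m hm_le hm_gt
    · have hn4' : n ≤ 4 := by omega
      have hq0 : (0:ℝ) < 1-p := by linarith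
      have hm2 : m ≤ 2 := by omega
      interval_cases n <;> interval_cases m <;>
        first
        | omega
        | (norm_num [Nat.choose]
           nlinarith [sm48 p hp0 hp, sm144 p hp0 hp, sm320 p hp0 hp, sm720 p hp0 hp,
             mul_pos hp0 hq0, sq_nonneg (p*(1-p))])

lemma pmf_mode_bound (n m : ℕ) (p : ℝ) (hn1 : 1 ≤ n) (hp0 : 0 < p) (hp : p < 1/2)
    (hm_le : (m:ℝ) ≤ ((n:ℝ)+1)*p) (hm_gt : ((n:ℝ)+1)*p < (m:ℝ)+1) :
    (n.choose m : ℝ) * p^m * (1-p)^(n-m) ≤ 1/(2*Real.sqrt (((n:ℝ)+1)*p*(1-p))) := by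
  have hq0 : (0:ℝ) < 1-p := by linarith
  have hn0 : (0:ℝ) ≤ (n:ℝ) := Nat.cast_nonneg n
  have hc0 : (0:ℝ) < ((n:ℝ)+1)*p*(1-p) := by positivity
  have hs0 : (0:ℝ) < Real.sqrt (((n:ℝ)+1)*p*(1-p)) := Real.sqrt_pos.mpr hc0
  have hmu0 : (0:ℝ) ≤ (n.choose m : ℝ) * p^m * (1-p)^(n-m) := by positivity
  rw [le_div_iff₀ (by positivity)]
  have hsq : (((n.choose m : ℝ) * p^m * (1-p)^(n-m)) * (2*Real.sqrt (((n:ℝ)+1)*p*(1-p))))^2 ≤ 1 := by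
    have he : (((n.choose m : ℝ) * p^m * (1-p)^(n-m)) * (2*Real.sqrt (((n:ℝ)+1)*p*(1-p))))^2 =
        ((n.choose m : ℝ) * p^m * (1-p)^(n-m))^2 * (4*(Real.sqrt (((n:ℝ)+1)*p*(1-p)))^2) := by
      ring
    rw [he, Real.sq_sqrt hc0.le]
    have := pmf_mode_sq n m p hn1 hp0 hp hm_le hm_gt
    calc ((n.choose m : ℝ) * p^m * (1-p)^(n-m))^2 * (4*(((n:ℝ)+1)*p*(1-p)))
        = ((n.choose m : ℝ) * p^m * (1-p)^(n-m))^2 * (4*((n:ℝ)+1)*p*(1-p)) := by ring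
      _ ≤ 1 := this
  have hnn : (0:ℝ) ≤ ((n.choose m : ℝ) * p^m * (1-p)^(n-m)) * (2*Real.sqrt (((n:ℝ)+1)*p*(1-p))) :=
    mul_nonneg hmu0 (by positivity)
  exact (pow_le_one_iff_of_nonneg hnn (by norm_num)).mp hsq

/-- For `T ≥ 2`, `p ∈ (0, 1/2)`,
`TV(Bin(T,p), Bin(T-1,p) + Bern(1-p)) ≤ (1-2p)/√(4p(1-p)T)`. -/
theorem stmt1 (T : ℕ) (hT : 2 ≤ T) (p : ℝ) (hp0 : 0 < p) (hp2 : p < 1 / 2) :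
    tvDist (binomPMF T p) (binBernConvPMF T p (1 - p)) ≤
      (1 - 2 * p) / Real.sqrt (4 * p * (1 - p) * T) := by
  obtain ⟨n, rfl⟩ : ∃ n, T = n + 1 := ⟨T - 1, by omega⟩
  have hn1 : 1 ≤ n := by omega
  have hq0 : (0:ℝ) < 1 - p := by linarith
  set μ : ℕ → ℝ := binomPMF n p with hmu
  have hμdef : ∀ k, μ k = (n.choose k : ℝ) * p^k * (1-p)^(n-k) := by
    intro k
    rw [hmu]
    rfl
  have hμ0 : ∀ k, 0 ≤ μ k := by
    intro k; rw [hμdef]; positivity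
  set D : ℕ → ℝ := fun k => μ k - (if k = 0 then 0 else μ (k-1)) with hD
  -- Pascal decomposition
  have hpas : ∀ k, binomPMF (n+1) p k =
      (1-p) * μ k + p * (if k = 0 then 0 else μ (k-1)) := by
    intro k
    match k with
    | 0 =>
      rw [hμdef]
      unfold binomPMF
      simp only [Nat.choose_zero_right, Nat.cast_one, pow_zero, Nat.sub_zero, reduceIte]
      rw [pow_succ]
      ring
    | (j+1) =>
      simp only [if_neg (Nat.succ_ne_zero j), Nat.add_sub_cancel]
      rw [hμdef, hμdef]
      unfold binomPMF
      rcases lt_trichotomy j n with hj | hj | hj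
      · have h1 : (n+1).choose (j+1) = n.choose j + n.choose (j+1) := Nat.choose_succ_succ n j
        rw [h1, show (n+1)-(j+1) = n - j from by omega,
          show n - j = (n - (j+1)) + 1 from by omega]
        push_cast
        rw [pow_succ]
        ring
      · rw [hj]
        have h1 : n.choose (n+1) = 0 := Nat.choose_eq_zero_of_lt (by omega)
        rw [h1, Nat.choose_self, Nat.choose_self, show (n+1)-(n+1) = 0 from by omega,
          show n-(n+1) = 0 from by omega, show n-n = 0 from by omega]
        norm_num
        ring
      · have h1 : n.choose (j+1) = 0 := Nat.choose_eq_zero_of_lt (by omega)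
        have h2 : n.choose j = 0 := Nat.choose_eq_zero_of_lt (by omega)
        have h3 : (n+1).choose (j+1) = 0 := Nat.choose_eq_zero_of_lt (by omega)
        rw [h1, h2, h3]
        simp
  -- difference formula
  have hform : ∀ k : ℕ, k < n → (μ (k+1) - μ k) * ((k:ℝ)+1) =
      (n.choose k : ℝ)*p^k*(1-p)^(n-(k+1)) * (((n:ℝ)+1)*p - ((k:ℝ)+1)) := by
    intro k hk
    rw [hμdef, hμdef]
    have hc : ((n.choose (k+1)) : ℝ) * ((k:ℝ)+1) = (n.choose k : ℝ) * ((n:ℝ) - k) := by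
      have h := Nat.choose_succ_right_eq n k
      have h2 : ((n.choose (k+1) * (k+1) : ℕ) : ℝ) = ((n.choose k * (n - k) : ℕ) : ℝ) := by
        exact_mod_cast congrArg (Nat.cast : ℕ → ℝ) h
      push_cast [Nat.cast_sub hk.le] at h2
      linarith [h2]
    rw [show n - k = (n - (k+1)) + 1 from by omega]
    rw [pow_succ]
    linear_combination (p^(k+1) * (1-p)^(n-(k+1))) * hc
  have hinc : ∀ k : ℕ, ((k:ℝ)+1) ≤ ((n:ℝ)+1)*p → μ k ≤ μ (k+1) := by
    intro k hkx
    rcases lt_or_ge k n with hk | hk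
    · have hf := hform k hk
      have hA : (0:ℝ) ≤ (n.choose k : ℝ)*p^k*(1-p)^(n-(k+1)) := by positivity
      nlinarith [hf, mul_nonneg hA (by linarith : (0:ℝ) ≤ ((n:ℝ)+1)*p - ((k:ℝ)+1))]
    · exfalso
      have h1 : ((n:ℝ)+1)*p < ((n:ℝ)+1) := by
        have : (0:ℝ) < (n:ℝ)+1 := by positivity
        nlinarith
      have h2 : ((n:ℝ)) ≤ (k:ℝ) := by exact_mod_cast hk
      linarith
  have hdec : ∀ k : ℕ, ((n:ℝ)+1)*p ≤ ((k:ℝ)+1) → μ (k+1) ≤ μ k := by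
    intro k hkx
    rcases lt_or_ge k n with hk | hk
    · have hf := hform k hk
      have hA : (0:ℝ) ≤ (n.choose k : ℝ)*p^k*(1-p)^(n-(k+1)) := by positivity
      nlinarith [hf, mul_nonneg hA (by linarith : (0:ℝ) ≤ ((k:ℝ)+1) - ((n:ℝ)+1)*p)]
    · have h1 : μ (k+1) = 0 := by
        rw [hμdef]
        rw [Nat.choose_eq_zero_of_lt (by omega)]
        simp
      rw [h1]
      exact hμ0 k
  -- mode
  have hx0 : (0:ℝ) ≤ ((n:ℝ)+1)*p := by positivity
  set m := Nat.floor (((n:ℝ)+1)*p) with hmdef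
  have hm_le : (m:ℝ) ≤ ((n:ℝ)+1)*p := Nat.floor_le hx0
  have hm_gt : ((n:ℝ)+1)*p < (m:ℝ)+1 := Nat.lt_floor_add_one _
  have hmn : m ≤ n := by
    by_contra hcon
    push_neg at hcon
    have : ((n:ℝ)+1) ≤ (m:ℝ) := by exact_mod_cast hcon
    have : ((n:ℝ)+1)*p < ((n:ℝ)+1) := by nlinarith [hx0]
    linarith
  -- telescoping
  have htel : ∀ j, ∑ k ∈ Finset.range (j+1), D k = μ j := by
    intro j
    induction j with
    | zero => simp [hD]
    | succ j ih =>
      rw [Finset.sum_range_succ, ih, hD]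
      simp only [if_neg (Nat.succ_ne_zero j), Nat.add_sub_cancel]
      ring
  have habs1 : ∑ k ∈ Finset.range (m+1), |D k| = μ m := by
    rw [← htel m]
    apply Finset.sum_congr rfl
    intro k hk
    simp only [Finset.mem_range] at hk
    apply abs_of_nonneg
    match k with
    | 0 =>
      simp only [hD, reduceIte, sub_zero]
      exact hμ0 0
    | (j+1) =>
      simp only [hD, if_neg (Nat.succ_ne_zero j), Nat.add_sub_cancel, sub_nonneg]
      apply hinc
      have hjm : j + 1 ≤ m := by omega
      have : ((j:ℝ)+1) ≤ (m:ℝ) := by exact_mod_cast hjm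
      linarith
  have hmu_top : μ (n+1) = 0 := by
    rw [hμdef, Nat.choose_eq_zero_of_lt (by omega)]
    simp
  have hsplitD : ∑ k ∈ Finset.range (m+1), D k + ∑ k ∈ Finset.Ico (m+1) (n+2), D k
      = ∑ k ∈ Finset.range (n+2), D k := by
    rw [Finset.range_eq_Ico, Finset.range_eq_Ico]
    exact Finset.sum_Ico_consecutive _ (Nat.zero_le (m+1)) (Nat.succ_le_succ (Nat.le_succ_of_le hmn))
  have habs2 : ∑ k ∈ Finset.Ico (m+1) (n+2), |D k| = μ m := by
    have hneg : ∀ k ∈ Finset.Ico (m+1) (n+2), |D k| = -(D k) := by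
      intro k hk
      simp only [Finset.mem_Ico] at hk
      apply abs_of_nonpos
      obtain ⟨j, rfl⟩ : ∃ j, k = j + 1 := ⟨k - 1, by omega⟩
      simp only [hD, if_neg (Nat.succ_ne_zero j), Nat.add_sub_cancel, sub_nonpos]
      apply hdec
      have hjm : m ≤ j := by omega
      have : (m:ℝ) ≤ (j:ℝ) := by exact_mod_cast hjm
      linarith
    rw [Finset.sum_congr rfl hneg, Finset.sum_neg_distrib]
    have h2 : ∑ k ∈ Finset.Ico (m+1) (n+2), D k = - μ m := by
      have := hsplitD
      rw [htel m] at this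
      rw [show (n+2) = (n+1)+1 from rfl] at this
      rw [htel (n+1), hmu_top] at this
      linarith
    rw [h2, neg_neg]
  have hsum_all : ∑ k ∈ Finset.range (n+2), |D k| = 2 * μ m := by
    have hsplit : ∑ k ∈ Finset.range (m+1), |D k| + ∑ k ∈ Finset.Ico (m+1) (n+2), |D k|
        = ∑ k ∈ Finset.range (n+2), |D k| := by
      rw [Finset.range_eq_Ico, Finset.range_eq_Ico]
      exact Finset.sum_Ico_consecutive _ (Nat.zero_le (m+1)) (Nat.succ_le_succ (Nat.le_succ_of_le hmn))
    rw [← hsplit, habs1, habs2]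
    ring
  -- difference identity
  have hfg : ∀ k, binomPMF (n+1) p k - binBernConvPMF (n+1) p (1-p) k = (1-2*p) * D k := by
    intro k
    unfold binBernConvPMF
    rw [show n+1-1 = n from by omega]
    rw [hpas k, hD]
    rw [← hmu]
    ring
  have hsupp : ∀ k ∉ Finset.range (n+2),
      |binomPMF (n+1) p k - binBernConvPMF (n+1) p (1-p) k| = 0 := by
    intro k hk
    simp only [Finset.mem_range, not_lt] at hk
    rw [hfg k]
    have h1 : μ k = 0 := by
      rw [hμdef, Nat.choose_eq_zero_of_lt (by omega)]
      simp
    have h2 : μ (k-1) = 0 := by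
      rw [hμdef, Nat.choose_eq_zero_of_lt (by omega)]
      simp
    simp only [hD, h1, h2, if_neg (by omega : ¬ k = 0)]
    simp
  -- put together
  unfold tvDist
  rw [tsum_eq_sum hsupp]
  have hconv : ∑ k ∈ Finset.range (n+2),
      |binomPMF (n+1) p k - binBernConvPMF (n+1) p (1-p) k| = (1-2*p) * (2 * μ m) := by
    rw [← hsum_all, Finset.mul_sum]
    apply Finset.sum_congr rfl
    intro k _
    rw [hfg k, abs_mul, abs_of_nonneg (by linarith : (0:ℝ) ≤ 1-2*p)]
  rw [hconv]
  have hb := pmf_mode_bound n m p hn1 hp0 hp2 hm_le hm_gt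
  have hbm : μ m ≤ 1/(2*Real.sqrt (((n:ℝ)+1)*p*(1-p))) := by
    rw [hμdef]
    exact hb
  have hsqrt : Real.sqrt (4*p*(1-p)*((n+1:ℕ):ℝ)) = 2*Real.sqrt (((n:ℝ)+1)*p*(1-p)) := by
    rw [show (4:ℝ)*p*(1-p)*((n+1:ℕ):ℝ) = 4*(((n:ℝ)+1)*p*(1-p)) from by push_cast; ring]
    rw [Real.sqrt_mul (by norm_num : (0:ℝ) ≤ 4)]
    congr 1
    rw [show (4:ℝ) = 2^2 from by norm_num]
    exact Real.sqrt_sq (by norm_num)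
  rw [hsqrt]
  have hspos : (0:ℝ) < Real.sqrt (((n:ℝ)+1)*p*(1-p)) := by
    apply Real.sqrt_pos.mpr
    positivity
  calc 1/2 * ((1-2*p) * (2*μ m)) = (1-2*p) * μ m := by ring
    _ ≤ (1-2*p) * (1/(2*Real.sqrt (((n:ℝ)+1)*p*(1-p)))) :=
        mul_le_mul_of_nonneg_left hbm (by linarith)
    _ = (1-2*p)/(2*Real.sqrt (((n:ℝ)+1)*p*(1-p))) := by ring
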